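/- arXiv:0803.0956 — 2 statements merged into one kernel-verified Lean document; each statement's English description precedes it below -/
import Mathlib

section
/- If S is a minimal separator of a chordal graph G, then at least two connected components of G \ S contain a vertex that is adjacent to every vertex of S. -/
open SimpleGraph

variable {V : Type*}

/-- `S` separates `u` and `w` in `G`: every walk from `u` to `w` meets `S`. -/
def Separates (G : SimpleGraph V) (S : Set V) (u w : V) : Prop :=
  ∀ p : G.Walk u w, ∃ x ∈ p.support, x ∈ S

/-- `S` is a minimal `{u,w}`-separator. -/
def IsMinUWSeparator (G : SimpleGraph V) (S : Set V) (u w : V) : Prop :=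
  u ≠ w ∧ ¬ G.Adj u w ∧ u ∉ S ∧ w ∉ S ∧ Separates G S u w ∧
    ∀ S' ⊂ S, ¬ Separates G S' u w

/-- `S` is a minimal separator of `G`. -/
def IsMinSeparator (G : SimpleGraph V) (S : Set V) : Prop :=
  ∃ u w : V, IsMinUWSeparator G S u w

/-- A vertex is simplicial if its neighborhood is a clique. -/
def IsSimplicial (G : SimpleGraph V) (v : V) : Prop :=
  G.IsClique (G.neighborSet v)

/-- A maximal clique (as a vertex set). -/
def IsMaxClique (G : SimpleGraph V) (s : Set V) : Prop :=
  G.IsClique s ∧ ∀ t : Set V, G.IsClique t → s ⊆ t → s = t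

/-- A graph is chordal if it has no induced cycle of length at least 4. -/
def Chordal (G : SimpleGraph V) : Prop :=
  ∀ n : ℕ, 4 ≤ n → IsEmpty (SimpleGraph.cycleGraph n ↪g G)

/-- The type of maximal cliques of `G`. -/
abbrev MaxCliques (G : SimpleGraph V) := {s : Set V // IsMaxClique G s}

/-- `T` is a clique tree of `G`: a tree on the maximal cliques such that for each vertex
the cliques containing it induce a connected subgraph. -/
def IsCliqueTree (G : SimpleGraph V) (T : SimpleGraph (MaxCliques G)) : Prop :=
  T.IsTree ∧ ∀ v : V, (T.induce {Q : MaxCliques G | v ∈ Q.1}).Connected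

/-- The set `X` induces a path in `T` (assuming `T` is a tree: connected with max degree 2). -/
def InducesPath {α : Type*} (T : SimpleGraph α) (X : Set α) : Prop :=
  (T.induce X).Connected ∧ ∀ x : X, ((T.induce X).neighborSet x).ncard ≤ 2

/-- `T` is a clique path tree of `G`. -/
def IsCliquePathTree (G : SimpleGraph V) (T : SimpleGraph (MaxCliques G)) : Prop :=
  T.IsTree ∧ ∀ v : V, InducesPath T {Q : MaxCliques G | v ∈ Q.1}

/-- `G` is a path graph: the empty graph, or a graph admitting a clique path tree. -/
def IsPathGraph (G : SimpleGraph V) : Prop :=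
  IsEmpty V ∨ ∃ T : SimpleGraph (MaxCliques G), IsCliquePathTree G T

/-- `G` is an interval graph: intersection graph of closed real intervals. -/
def IsIntervalGraph (G : SimpleGraph V) : Prop :=
  ∃ f : V → Set ℝ, (∀ v, ∃ a b : ℝ, a ≤ b ∧ f v = Set.Icc a b) ∧
    ∀ u v : V, u ≠ v → (G.Adj u v ↔ (f u ∩ f v).Nonempty)

/-- `a` is a middle of `b, c`: every walk from `b` to `c` meets `N(a)`. -/
def IsMiddle (G : SimpleGraph V) (a b c : V) : Prop :=
  ∀ p : G.Walk b c, ∃ x ∈ p.support, G.Adj a x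

/-- `a, b, c` form an asteroidal triple. -/
def AsteroidalTriple (G : SimpleGraph V) (a b c : V) : Prop :=
  a ≠ b ∧ a ≠ c ∧ b ≠ c ∧ ¬ G.Adj a b ∧ ¬ G.Adj a c ∧ ¬ G.Adj b c ∧
  (∃ p : G.Walk b c, ∀ x ∈ p.support, ¬ G.Adj a x) ∧
  (∃ p : G.Walk a c, ∀ x ∈ p.support, ¬ G.Adj b x) ∧
  (∃ p : G.Walk a b, ∀ x ∈ p.support, ¬ G.Adj c x)

/-- The closed neighborhood clique `Q_v` of a simplicial vertex. -/
def Qv (G : SimpleGraph V) (v : V) : Set V := insert v (G.neighborSet v)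

/-- `S_v`: the vertices of `Q_v` having a neighbor outside `Q_v`. -/
def Sv (G : SimpleGraph V) (v : V) : Set V :=
  {x | x ∈ Qv G v ∧ ∃ y, y ∉ Qv G v ∧ G.Adj x y}

/-- A simplicial vertex is special if `S_v` is an inclusion-maximal minimal separator. -/
def IsSpecial (G : SimpleGraph V) (v : V) : Prop :=
  IsSimplicial G v ∧ IsMinSeparator G (Sv G v) ∧
    ∀ S : Set V, IsMinSeparator G S → Sv G v ⊆ S → S = Sv G v

/-- Connected components of `G ∖ S` containing a vertex complete to `S`. -/
def CompleteComponents (G : SimpleGraph V) (S : Set V) :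
    Set ((G.induce (Sᶜ : Set V)).ConnectedComponent) :=
  {C | ∃ x : (Sᶜ : Set V), (G.induce (Sᶜ : Set V)).connectedComponentMk x = C ∧
        S ⊆ G.neighborSet x.1}

/-- The wheel graph: an `n`-cycle plus a universal vertex (`none`). -/
def wheelGraph (n : ℕ) : SimpleGraph (Option (Fin n)) :=
  SimpleGraph.fromRel (fun a b =>
    (∃ i j : Fin n, a = some i ∧ b = some j ∧ (SimpleGraph.cycleGraph n).Adj i j) ∨
    (a = none ∧ b ≠ none))

/-- `y` lies on the tree-path between `x` and `z` in `T`. -/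
def OnTreePath {α : Type*} (T : SimpleGraph α) (x y z : α) : Prop :=
  ∃ p : T.Walk x z, p.IsPath ∧ y ∈ p.support

namespace ChordalAux

open SimpleGraph.Walk

variable {G : SimpleGraph V} {S : Set V}


open SimpleGraph.Walk


lemma length_drop {u v : V} (p : G.Walk u v) (n : ℕ) :
    (p.drop n).length = p.length - n := by
  induction p generalizing n with
  | nil => cases n <;> simp [Walk.drop]
  | cons h q ih =>
    cases n with
    | zero => simp [Walk.drop]
    | succ n => simpa [Walk.drop] using ih n

lemma getVert_drop {u v : V} (p : G.Walk u v) (n i : ℕ) :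
    (p.drop n).getVert i = p.getVert (n + i) := by
  induction p generalizing n with
  | nil => cases n <;> simp [Walk.drop, Walk.getVert]
  | cons h q ih =>
    cases n with
    | zero => simp [Walk.drop]
    | succ n =>
      exact Walk.drop_getVert _ _ _

/-- Initial segment of a walk. -/
def wtake {u v : V} : (p : G.Walk u v) → (n : ℕ) → G.Walk u (p.getVert n)
  | p, 0 => Walk.nil.copy rfl (p.getVert_zero).symm
  | .nil, _ + 1 => .nil
  | .cons h q, n + 1 => Walk.cons h (wtake q n)

lemma length_wtake {u v : V} (p : G.Walk u v) (n : ℕ) (hn : n ≤ p.length) :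
    (wtake p n).length = n := by
  induction p generalizing n with
  | nil => simp at hn; subst hn; rfl
  | cons h q ih =>
    cases n with
    | zero => simp [wtake]
    | succ n =>
      simp only [Walk.length_cons] at hn
      simp [wtake, ih n (by omega)]

private lemma min_getVert_inj_aux {a b : V} {p : G.Walk a b}
    (hmin : ∀ q : G.Walk a b, p.length ≤ q.length) {i j : ℕ}
    (hj : j ≤ p.length) (he : p.getVert i = p.getVert j) (hij : i < j) : False := by
  have hlen := hmin ((wtake p i).append ((p.drop j).copy he.symm rfl))
  rw [Walk.length_append, length_wtake p i (by omega), Walk.length_copy, length_drop] at hlen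
  omega

lemma min_getVert_inj {a b : V} {p : G.Walk a b}
    (hmin : ∀ q : G.Walk a b, p.length ≤ q.length) {i j : ℕ}
    (hi : i ≤ p.length) (hj : j ≤ p.length) (he : p.getVert i = p.getVert j) : i = j := by
  by_contra hne
  rcases Ne.lt_or_gt hne with h | h
  · exact min_getVert_inj_aux hmin hj he h
  · exact min_getVert_inj_aux hmin hi he.symm h

private lemma min_induced_aux {a b : V} {p : G.Walk a b}
    (hmin : ∀ q : G.Walk a b, p.length ≤ q.length) {i j : ℕ}
    (hj : j ≤ p.length) (hadj : G.Adj (p.getVert i) (p.getVert j)) (hij : i + 1 < j) :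
    False := by
  have hlen := hmin ((wtake p i).append (Walk.cons hadj (p.drop j)))
  rw [Walk.length_append, length_wtake p i (by omega), Walk.length_cons, length_drop] at hlen
  omega

lemma min_induced {a b : V} {p : G.Walk a b}
    (hmin : ∀ q : G.Walk a b, p.length ≤ q.length) {i j : ℕ}
    (hi : i ≤ p.length) (hj : j ≤ p.length)
    (hadj : G.Adj (p.getVert i) (p.getVert j)) : j = i + 1 ∨ i = j + 1 := by
  have hne : i ≠ j := by rintro rfl; exact G.loopless.irrefl _ hadj
  by_contra hcon
  push_neg at hcon
  rcases Ne.lt_or_gt hne with h | h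
  · exact min_induced_aux hmin hj hadj (by omega)
  · exact min_induced_aux hmin hi hadj.symm (by omega)

lemma exists_min_walk (H : SimpleGraph V) (a b : V) (h : Nonempty (H.Walk a b)) :
    ∃ p : H.Walk a b, ∀ q : H.Walk a b, p.length ≤ q.length := by
  classical
  obtain ⟨p0⟩ := h
  have hex : ∃ l, ∃ q : H.Walk a b, q.length = l := ⟨p0.length, p0, rfl⟩
  obtain ⟨q, hq⟩ := Nat.find_spec hex
  exact ⟨q, fun r => by rw [hq]; exact Nat.find_min' _ ⟨r, rfl⟩⟩



lemma no_chordless_cycle (hG : Chordal G) {n : ℕ} (hn : 4 ≤ n) (c : ℕ → V)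
    (hinj : ∀ i j, i < n → j < n → c i = c j → i = j)
    (hadj : ∀ i, i + 1 < n → G.Adj (c i) (c (i + 1)))
    (hwrap : G.Adj (c (n - 1)) (c 0))
    (hchord : ∀ i j, i < j → j < n → G.Adj (c i) (c j) →
      j = i + 1 ∨ (i = 0 ∧ j = n - 1)) : False := by
  have hn1 : 1 < n := by omega
  -- value of Fin subtraction
  have hsub : ∀ a b : Fin n, (a - b).val = (a.val + (n - b.val)) % n := by
    intro a b
    rw [Fin.sub_def]
    simp [Nat.add_comm]
  have key : ∀ a b : Fin n, (b - a).val = 1 → G.Adj (c a.val) (c b.val) := by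
    intro a b h
    rw [hsub] at h
    set d := b.val + (n - a.val) with hd
    have hdlt : d < 2 * n := by have := b.isLt; have := a.isLt; omega
    have hdiv : n * (d / n) + d % n = d := Nat.div_add_mod d n
    have hdivlt : d / n < 2 := by
      rw [Nat.div_lt_iff_lt_mul (by omega)]; omega
    have hcases : d = 1 ∨ d = n + 1 := by
      have h01 : d / n = 0 ∨ d / n = 1 := Nat.le_one_iff_eq_zero_or_eq_one.mp (Nat.le_of_lt_succ hdivlt)
      rcases h01 with h0 | h0 <;> rw [h0] at hdiv <;> omega
    have hb := b.isLt; have ha := a.isLt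
    rcases hcases with h1 | h1
    · -- a.val = n - 1, b.val = 0
      have hav : a.val = n - 1 := by omega
      have hbv : b.val = 0 := by omega
      rw [hav, hbv]; exact hwrap
    · have hbv : b.val = a.val + 1 := by omega
      rw [hbv]; exact hadj a.val (by omega)
  have emb : SimpleGraph.cycleGraph n ↪g G := by
    refine ⟨⟨fun i => c i.val, fun i j h => Fin.ext (hinj _ _ i.isLt j.isLt h)⟩, ?_⟩
    intro a b
    show G.Adj (c a.val) (c b.val) ↔ (SimpleGraph.cycleGraph n).Adj a b
    rw [SimpleGraph.cycleGraph_adj']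
    constructor
    · intro h
      have hne : a.val ≠ b.val := fun he => G.loopless.irrefl _ (by rwa [he] at h)
      rcases Ne.lt_or_gt hne with hlt | hlt
      · rcases hchord a.val b.val hlt b.isLt h with h1 | ⟨h1, h2⟩
        · right; rw [hsub]
          have := a.isLt
          rw [h1, show a.val + 1 + (n - a.val) = n + 1 by omega, Nat.add_mod_left]
          exact Nat.mod_eq_of_lt hn1
        · left; rw [hsub]
          have := b.isLt
          rw [h1, h2, show 0 + (n - (n-1)) = 1 by omega]
          exact Nat.mod_eq_of_lt hn1
      · rcases hchord b.val a.val hlt a.isLt h.symm with h1 | ⟨h1, h2⟩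
        · left; rw [hsub]
          have := b.isLt
          rw [h1, show b.val + 1 + (n - b.val) = n + 1 by omega, Nat.add_mod_left]
          exact Nat.mod_eq_of_lt hn1
        · right; rw [hsub]
          have := a.isLt
          rw [h1, h2, show 0 + (n - (n-1)) = 1 by omega]
          exact Nat.mod_eq_of_lt hn1
    · rintro (h | h)
      · exact (key b a h).symm
      · exact key a b h
  exact (hG n hn).false emb



/-- Reachability in `G` avoiding `S`. -/
def AReach (G : SimpleGraph V) (S : Set V) (u x : V) : Prop :=
  ∃ p : G.Walk u x, ∀ z ∈ p.support, z ∉ S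

lemma AReach.notMem {u x : V} (h : AReach G S u x) : x ∉ S := by
  obtain ⟨p, hp⟩ := h
  exact hp x p.end_mem_support

lemma AReach.refl {u : V} (hu : u ∉ S) : AReach G S u u :=
  ⟨.nil, by simpa using hu⟩

lemma AReach.start_notMem {u x : V} (h : AReach G S u x) : u ∉ S := by
  obtain ⟨p, hp⟩ := h
  exact hp u p.start_mem_support

lemma AReach.of_mem_support {u x : V} {p : G.Walk u x} (hp : ∀ z ∈ p.support, z ∉ S)
    {z : V} (hz : z ∈ p.support) : AReach G S u z := by
  classical
  exact ⟨p.takeUntil z hz, fun y hy => hp y (p.support_takeUntil_subset hz hy)⟩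

lemma AReach.trans {u x y : V} (h1 : AReach G S u x) (h2 : AReach G S x y) :
    AReach G S u y := by
  obtain ⟨p, hp⟩ := h1
  obtain ⟨q, hq⟩ := h2
  refine ⟨p.append q, fun z hz => ?_⟩
  rcases (Walk.mem_support_append_iff p q).mp hz with h | h
  · exact hp z h
  · exact hq z h

lemma AReach.adj {u x y : V} (h : AReach G S u x) (hxy : G.Adj x y) (hy : y ∉ S) :
    AReach G S u y :=
  h.trans ⟨Walk.cons hxy .nil, by
    intro z hz
    simp only [Walk.support_cons, Walk.support_nil, List.mem_cons, List.mem_singleton] at hz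
    rcases hz with rfl | rfl | h'
    · exact h.notMem
    · exact hy
    · simp at h'⟩

lemma walk_in_comp {u x y : V} (h1 : AReach G S u x) (h2 : AReach G S u y) :
    ∃ m : G.Walk x y, ∀ z ∈ m.support, AReach G S u z := by
  obtain ⟨p, hp⟩ := h1
  obtain ⟨q, hq⟩ := h2
  refine ⟨p.reverse.append q, fun z hz => ?_⟩
  rcases (Walk.mem_support_append_iff _ q).mp hz with h | h
  · exact AReach.of_mem_support hp (by simpa [Walk.support_reverse] using h)
  · exact AReach.of_mem_support hq h

lemma not_both_sides {u w z : V} (hsep : Separates G S u w)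
    (h1 : AReach G S u z) (h2 : AReach G S w z) : False := by
  obtain ⟨p, hp⟩ := h1
  obtain ⟨q, hq⟩ := h2
  obtain ⟨x, hx, hxS⟩ := hsep (p.append q.reverse)
  rcases (Walk.mem_support_append_iff _ _).mp hx with h | h
  · exact hp x h hxS
  · exact hq x (by simpa [Walk.support_reverse] using h) hxS

lemma minsep_symm {u w : V} (h : IsMinUWSeparator G S u w) :
    IsMinUWSeparator G S w u := by
  obtain ⟨huw, hadj, huS, hwS, hsep, hmin⟩ := h
  refine ⟨huw.symm, fun h' => hadj h'.symm, hwS, huS, ?_, ?_⟩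
  · intro p
    obtain ⟨x, hx, hxS⟩ := hsep p.reverse
    exact ⟨x, by simpa [Walk.support_reverse] using hx, hxS⟩
  · intro S' hss hsep'
    refine hmin S' hss (fun p => ?_)
    obtain ⟨x, hx, hxS⟩ := hsep' p.reverse
    exact ⟨x, by simpa [Walk.support_reverse] using hx, hxS⟩

lemma full_side {u w : V} (h : IsMinUWSeparator G S u w) {s : V} (hs : s ∈ S) :
    ∃ x, AReach G S u x ∧ G.Adj s x := by
  classical
  obtain ⟨huw, hadjuw, huS, hwS, hsep, hmin⟩ := h
  have hss : S \ {s} ⊂ S := Set.sdiff_singleton_ssubset.mpr hs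
  have hnsep := hmin _ hss
  rw [Separates] at hnsep
  push_neg at hnsep
  obtain ⟨p, hp⟩ := hnsep
  have hsmem : s ∈ p.support := by
    obtain ⟨x, hx, hxS⟩ := hsep p
    have hx' := hp x hx
    have : x = s := by
      by_contra hne
      exact hx' ⟨hxS, hne⟩
    rwa [this] at hx
  set q := p.takeUntil s hsmem with hqdef
  have hqsub := p.support_takeUntil_subset hsmem
  have hcount := p.count_support_takeUntil_eq_one hsmem
  have hq0 : ¬ q.Nil := by
    intro hnil
    have : q.length = 0 := Walk.nil_iff_length_eq.mp hnil
    have : u = s := by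
      have h1 := q.getVert_zero
      have h2 := q.getVert_length
      rw [this] at h2
      rw [h1] at h2
      exact h2
    exact huS (this ▸ hs)
  set r := q.reverse with hrdef
  have hr : ¬ r.Nil := by
    rw [Walk.not_nil_iff_lt_length] at hq0 ⊢
    rwa [hrdef, Walk.length_reverse]
  refine ⟨r.getVert 1, ⟨r.tail.reverse, ?_⟩, r.adj_snd hr⟩
  intro z hz hzS
  have hz' : z ∈ r.tail.support := by simpa [Walk.support_reverse, -Walk.reverse_tail] using hz
  have hzr : z ∈ r.support := by
    rw [← Walk.cons_support_tail hr]
    exact List.mem_cons_of_mem _ hz'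
  have hzq : z ∈ q.support := by simpa [hrdef, Walk.support_reverse] using hzr
  have hzs : z = s := by
    by_contra hne
    exact hp z (hqsub hzq) ⟨hzS, hne⟩
  subst hzs
  have hc1 : (r.support).count z = 1 := by
    rw [hrdef, Walk.support_reverse, List.count_reverse]
    exact hcount
  rw [← Walk.cons_support_tail hr, List.count_cons] at hc1
  have : 1 ≤ (r.tail.support).count z := List.count_pos_iff.mpr hz'
  simp at hc1
  omega


/-- The restriction of `G` to a vertex set, as a graph on the same vertex type. -/
def Gr (G : SimpleGraph V) (X : Set V) : SimpleGraph V where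
  Adj x y := G.Adj x y ∧ x ∈ X ∧ y ∈ X
  symm := ⟨fun x y ⟨h, hx, hy⟩ => ⟨h.symm, hy, hx⟩⟩
  loopless := ⟨fun x ⟨h, _⟩ => G.loopless.irrefl x h⟩

lemma lift_walk {X : Set V} {x y : V} (p : G.Walk x y) (h : ∀ z ∈ p.support, z ∈ X) :
    Nonempty ((Gr G X).Walk x y) := by
  induction p with
  | nil => exact ⟨.nil⟩
  | @cons a b c ha p ih =>
    obtain ⟨q⟩ := ih (fun z hz => h z (by simp [hz]))
    exact ⟨Walk.cons ⟨ha, h a (by simp), h b (by simp [p.start_mem_support])⟩ q⟩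

lemma getVert_mem {X : Set V} {a b : V} (q : (Gr G X).Walk a b)
    (hL : q.length ≠ 0) {i : ℕ} (hi : i ≤ q.length) : q.getVert i ∈ X := by
  rcases Nat.lt_or_ge i q.length with h | h
  · exact (q.adj_getVert_succ h).2.1
  · have hi' : i = q.length := by omega
    subst hi'
    have h2 := q.adj_getVert_succ (i := q.length - 1) (by omega)
    rw [show q.length - 1 + 1 = q.length by omega] at h2
    exact h2.2.2

lemma sep_clique (hG : Chordal G) {u w s t : V} (h : IsMinUWSeparator G S u w)
    (hs : s ∈ S) (ht : t ∈ S) (hst : s ≠ t) : G.Adj s t := by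
  classical
  by_contra hadjst
  obtain ⟨xs, hxs, hsxs⟩ := full_side h hs
  obtain ⟨xt, hxt, htxt⟩ := full_side h ht
  obtain ⟨ys, hys, hsys⟩ := full_side (minsep_symm h) hs
  obtain ⟨yt, hyt, htyt⟩ := full_side (minsep_symm h) ht
  have hsep := h.2.2.2.2.1
  set X1 : Set V := {x | AReach G S u x} ∪ {s, t} with hX1
  set X2 : Set V := {x | AReach G S w x} ∪ {s, t} with hX2
  -- min walks on both sides
  have hw1 : Nonempty ((Gr G X1).Walk s t) := by
    obtain ⟨m1, hm1⟩ := walk_in_comp hxs hxt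
    refine lift_walk (Walk.cons hsxs (m1.append (Walk.cons htxt.symm .nil))) ?_
    intro z hz
    simp only [Walk.support_cons, List.mem_cons, Walk.mem_support_append_iff,
      Walk.support_nil, List.mem_singleton] at hz
    rcases hz with rfl | hz | hz
    · exact Or.inr (by simp)
    · exact Or.inl (hm1 z hz)
    · rcases hz with rfl | rfl | h0
      · exact Or.inl hxt
      · exact Or.inr (by simp)
      · exact absurd h0 (List.not_mem_nil)
  have hw2 : Nonempty ((Gr G X2).Walk s t) := by
    obtain ⟨m2, hm2⟩ := walk_in_comp hys hyt
    refine lift_walk (Walk.cons hsys (m2.append (Walk.cons htyt.symm .nil))) ?_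
    intro z hz
    simp only [Walk.support_cons, List.mem_cons, Walk.mem_support_append_iff,
      Walk.support_nil, List.mem_singleton] at hz
    rcases hz with rfl | hz | hz
    · exact Or.inr (by simp)
    · exact Or.inl (hm2 z hz)
    · rcases hz with rfl | rfl | h0
      · exact Or.inl hyt
      · exact Or.inr (by simp)
      · exact absurd h0 (List.not_mem_nil)
  obtain ⟨q1, hq1min⟩ := exists_min_walk _ s t hw1
  obtain ⟨q2, hq2min⟩ := exists_min_walk _ s t hw2
  set L1 := q1.length with hL1def
  set L2 := q2.length with hL2def
  -- lengths at least 2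
  have hL1 : 2 ≤ L1 := by
    by_contra hcon
    push_neg at hcon
    have h0 : L1 = 0 ∨ L1 = 1 := by omega
    rcases h0 with h0 | h0
    · apply hst
      have h2 := q1.getVert_length
      rw [show q1.length = 0 by omega, q1.getVert_zero] at h2
      exact h2
    · have h2 := q1.adj_getVert_succ (i := 0) (by omega)
      rw [q1.getVert_zero] at h2
      apply hadjst
      have h3 := q1.getVert_length
      rw [show q1.length = 0 + 1 by omega] at h3
      rw [← h3]
      exact h2.1
  have hL2 : 2 ≤ L2 := by
    by_contra hcon
    push_neg at hcon
    have h0 : L2 = 0 ∨ L2 = 1 := by omega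
    rcases h0 with h0 | h0
    · apply hst
      have h2 := q2.getVert_length
      rw [show q2.length = 0 by omega, q2.getVert_zero] at h2
      exact h2
    · have h2 := q2.adj_getVert_succ (i := 0) (by omega)
      rw [q2.getVert_zero] at h2
      apply hadjst
      have h3 := q2.getVert_length
      rw [show q2.length = 0 + 1 by omega] at h3
      rw [← h3]
      exact h2.1
  have hmem1 : ∀ i ≤ L1, q1.getVert i ∈ X1 := fun i hi => getVert_mem q1 (by omega) hi
  have hmem2 : ∀ i ≤ L2, q2.getVert i ∈ X2 := fun i hi => getVert_mem q2 (by omega) hi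
  have hinj1 := fun {i j} hi hj he => min_getVert_inj hq1min (i := i) (j := j) hi hj he
  have hinj2 := fun {i j} hi hj he => min_getVert_inj hq2min (i := i) (j := j) hi hj he
  -- interior vertices are in the components
  have hint1 : ∀ i, 1 ≤ i → i ≤ L1 - 1 → AReach G S u (q1.getVert i) := by
    intro i h1 h2
    rcases hmem1 i (by omega) with hm | hm
    · exact hm
    · exfalso
      rcases hm with hm | hm
      · have : i = 0 := hinj1 (by omega) (by omega)
          (by rw [hm, q1.getVert_zero])
        omega
      · simp only [Set.mem_singleton_iff] at hm
        have : i = L1 := hinj1 (by omega) (by omega)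
          (by rw [hm]; exact q1.getVert_length.symm)
        omega
  have hint2 : ∀ i, 1 ≤ i → i ≤ L2 - 1 → AReach G S w (q2.getVert i) := by
    intro i h1 h2
    rcases hmem2 i (by omega) with hm | hm
    · exact hm
    · exfalso
      rcases hm with hm | hm
      · have : i = 0 := hinj2 (by omega) (by omega)
          (by rw [hm, q2.getVert_zero])
        omega
      · simp only [Set.mem_singleton_iff] at hm
        have : i = L2 := hinj2 (by omega) (by omega)
          (by rw [hm]; exact q2.getVert_length.symm)
        omega
  have hcross : ∀ z z', AReach G S u z → AReach G S w z' → ¬ G.Adj z z' := by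
    intro z z' h1 h2 hadj
    exact not_both_sides hsep (h1.adj hadj h2.notMem) h2
  -- the cycle
  set n := L1 + L2 with hndef
  set c : ℕ → V := fun i => if i ≤ L1 then q1.getVert i else q2.getVert (n - i) with hcdef
  have hc1 : ∀ a, a ≤ L1 → c a = q1.getVert a := fun a ha => if_pos ha
  have hc2 : ∀ a, L1 ≤ a → c a = q2.getVert (n - a) := by
    intro a ha
    rcases eq_or_lt_of_le ha with heq | hlt
    · rw [← heq, hc1 L1 le_rfl, show n - L1 = L2 by omega]
      exact q1.getVert_length.trans q2.getVert_length.symm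
    · exact if_neg (by omega)
  have hc0 : c 0 = s := by rw [hc1 0 (by omega), q1.getVert_zero]
  -- injectivity claim for i < j
  have claimInj : ∀ i j, i < j → j < n → c i = c j → False := by
    intro i j hij hj he
    rcases le_or_gt j L1 with hjL | hjL
    · rw [hc1 i (by omega), hc1 j hjL] at he
      have := hinj1 (by omega) (by omega) he
      omega
    · have hjint : AReach G S w (c j) := by
        rw [hc2 j (by omega)]
        exact hint2 (n - j) (by omega) (by omega)
      rcases le_or_gt i L1 with hiL | hiL
      · rcases Nat.eq_or_lt_of_le (Nat.zero_le i) with hi0 | hi0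
        · rw [← hi0, hc0] at he
          exact hjint.notMem (he ▸ hs)
        · rcases Nat.eq_or_lt_of_le hiL with hiL1 | hiL1
          · rw [hc1 i hiL, hiL1, q1.getVert_length] at he
            exact hjint.notMem (he ▸ ht)
          · have hiint : AReach G S u (c i) := by
              rw [hc1 i hiL]
              exact hint1 i (by omega) (by omega)
            exact not_both_sides hsep hiint (he ▸ hjint)
      · rw [hc2 i (by omega), hc2 j (by omega)] at he
        have := hinj2 (i := n - i) (j := n - j) (by omega) (by omega) he
        omega
  have hKadj1 : ∀ i j, i ≤ L1 → j ≤ L1 → G.Adj (c i) (c j) → j = i + 1 ∨ i = j + 1 := by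
    intro i j hi hj hadj
    rw [hc1 i hi, hc1 j hj] at hadj
    exact min_induced hq1min (by omega) (by omega) ⟨hadj, hmem1 i hi, hmem1 j hj⟩
  have hKadj2 : ∀ i j, L1 ≤ i ∨ i = 0 → L1 ≤ j ∨ j = 0 → i ≤ n → j ≤ n →
      G.Adj (c i) (c j) →
      (if j = 0 then 0 else n - j) = (if i = 0 then 0 else n - i) + 1 ∨
      (if i = 0 then 0 else n - i) = (if j = 0 then 0 else n - j) + 1 := by
    have e : ∀ a, L1 ≤ a ∨ a = 0 → a ≤ n → c a = q2.getVert (if a = 0 then 0 else n - a) := by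
      intro a ha ha'
      rcases ha with ha | rfl
      · rw [if_neg (by omega), hc2 a ha]
      · rw [if_pos rfl, hc0, q2.getVert_zero]
    have mem : ∀ a, L1 ≤ a ∨ a = 0 → a ≤ n → (if a = 0 then 0 else n - a) ≤ L2 := by
      intro a ha ha'
      split <;> omega
    intro i j hi hj hi' hj' hadj
    rw [e i hi hi', e j hj hj'] at hadj
    exact min_induced hq2min (mem i hi hi') (mem j hj hj')
      ⟨hadj, hmem2 _ (mem i hi hi'), hmem2 _ (mem j hj hj')⟩
  have claimChord : ∀ i j, i < j → j < n → G.Adj (c i) (c j) →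
      j = i + 1 ∨ (i = 0 ∧ j = n - 1) := by
    intro i j hij hj hadj
    rcases le_or_gt j L1 with hjL | hjL
    · rcases hKadj1 i j (by omega) hjL hadj with h1 | h1
      · exact Or.inl h1
      · omega
    · rcases Nat.eq_or_lt_of_le (Nat.zero_le i) with hi0 | hi0
      · have := hKadj2 i j (Or.inr hi0.symm) (Or.inl (by omega)) (by omega) (by omega) hadj
        rw [if_pos hi0.symm, if_neg (by omega)] at this
        rcases this with h1 | h1
        · right
          exact ⟨hi0.symm, by omega⟩
        · omega
      · rcases le_or_gt i L1 with hiL | hiL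
        · rcases Nat.eq_or_lt_of_le hiL with hiL1 | hiL1
          · have := hKadj2 i j (Or.inl (by omega)) (Or.inl (by omega)) (by omega) (by omega) hadj
            rw [if_neg (by omega), if_neg (by omega)] at this
            omega
          · exact absurd hadj (by
              rw [hc1 i (by omega), hc2 j (by omega)]
              exact hcross _ _ (hint1 i (by omega) (by omega))
                (hint2 (n - j) (by omega) (by omega)))
        · have := hKadj2 i j (Or.inl (by omega)) (Or.inl (by omega)) (by omega) (by omega) hadj
          rw [if_neg (by omega), if_neg (by omega)] at this
          omega
  refine no_chordless_cycle hG (show 4 ≤ n by omega) c ?_ ?_ ?_ claimChord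
  · intro i j hi hj he
    by_contra hne
    rcases Ne.lt_or_gt hne with hlt | hlt
    · exact claimInj i j hlt hj he
    · exact claimInj j i hlt hi he.symm
  · intro i hi
    rcases le_or_gt (i + 1) L1 with hiL | hiL
    · rw [hc1 i (by omega), hc1 (i+1) hiL]
      exact (q1.adj_getVert_succ (by omega)).1
    · rw [hc2 i (by omega), hc2 (i+1) (by omega), show n - (i+1) = n - i - 1 by omega]
      have h2 := q2.adj_getVert_succ (i := n - i - 1) (by omega)
      rw [show n - i - 1 + 1 = n - i by omega] at h2
      exact h2.1.symm
  · rw [hc0, hc2 (n-1) (by omega), show n - (n-1) = 1 by omega]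
    have h2 := q2.adj_getVert_succ (i := 0) (by omega)
    rw [q2.getVert_zero] at h2
    exact h2.1.symm


lemma complete_side [Fintype V] (hG : Chordal G) {u w : V}
    (h : IsMinUWSeparator G S u w) :
    ∃ x, AReach G S u x ∧ S ⊆ G.neighborSet x := by
  classical
  have hsep := h.2.2.2.2.1
  have huS := h.2.2.1
  obtain ⟨v, hvmem, hvmax⟩ := Finset.exists_max_image
    (Finset.univ.filter (fun x => AReach G S u x))
    (fun x => (S.toFinset.filter (fun z => G.Adj x z)).card)
    ⟨u, by simp [AReach.refl huS]⟩
  have hv : AReach G S u v := by simpa using hvmem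
  refine ⟨v, hv, ?_⟩
  intro t ht
  show G.Adj v t
  by_contra hvt
  obtain ⟨y, hy, hty⟩ := full_side h ht
  obtain ⟨m, hm⟩ := walk_in_comp hv hy
  set X : Set V := {x | AReach G S u x} ∪ {t} with hXdef
  have hwne : Nonempty ((Gr G X).Walk v t) := by
    refine lift_walk (m.append (Walk.cons hty.symm .nil)) ?_
    intro z hz
    rcases (Walk.mem_support_append_iff _ _).mp hz with hz | hz
    · exact Or.inl (hm z hz)
    · simp only [Walk.support_cons, Walk.support_nil, List.mem_cons,
        List.mem_singleton] at hz
      rcases hz with rfl | rfl | h0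
      · exact Or.inl hy
      · exact Or.inr rfl
      · exact absurd h0 (List.not_mem_nil)
  obtain ⟨q, hqmin⟩ := exists_min_walk _ v t hwne
  set L := q.length with hLdef
  have hvS : v ∉ S := hv.notMem
  have hL : 2 ≤ L := by
    by_contra hcon
    push_neg at hcon
    have h0 : L = 0 ∨ L = 1 := by omega
    rcases h0 with h0 | h0
    · have h2 := q.getVert_length
      rw [show q.length = 0 by omega, q.getVert_zero] at h2
      exact hvS (h2 ▸ ht)
    · have h2 := q.adj_getVert_succ (i := 0) (by omega)
      rw [q.getVert_zero] at h2
      apply hvt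
      have h3 := q.getVert_length
      rw [show q.length = 0 + 1 by omega] at h3
      rw [← h3]
      exact h2.1
  have hmem : ∀ i ≤ L, q.getVert i ∈ X := fun i hi => getVert_mem q (by omega) hi
  have hinj := fun {i j} hi hj he => min_getVert_inj hqmin (i := i) (j := j) hi hj he
  have hgL : q.getVert L = t := q.getVert_length
  have hintC : ∀ i ≤ L - 1, AReach G S u (q.getVert i) := by
    intro i hi
    rcases hmem i (by omega) with hm' | hm'
    · exact hm'
    · exfalso
      simp only [Set.mem_singleton_iff] at hm'
      have : i = L := hinj (by omega) (by omega) (by rw [hm', hgL])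
      omega
  set x := q.getVert (L - 1) with hxdef
  have hxC : AReach G S u x := hintC (L - 1) le_rfl
  have hxt : G.Adj x t := by
    have h2 := q.adj_getVert_succ (i := L - 1) (by omega)
    rw [show L - 1 + 1 = L by omega, hgL] at h2
    exact h2.1
  have claim : ∀ s, s ∈ S → G.Adj v s → G.Adj x s := by
    intro s hsS hvs
    by_contra hsx
    have hstne : s ≠ t := fun heq => hvt (heq ▸ hvs)
    have hst : G.Adj s t := sep_clique hG h hsS ht hstne
    have hsX : s ∉ X := by
      rintro (hx | hx)
      · exact hx.notMem hsS
      · exact hstne hx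
    set P : ℕ → Prop := fun i => G.Adj s (q.getVert i) with hPdef
    have hP0 : P 0 := by rw [hPdef]; simpa [q.getVert_zero] using hvs.symm
    set i := Nat.findGreatest P (L - 1) with hidef
    have hPi : P i := Nat.findGreatest_spec (Nat.zero_le _) hP0
    have hiLe : i ≤ L - 1 := Nat.findGreatest_le _
    have higr : ∀ k, i < k → k ≤ L - 1 → ¬ P k :=
      fun k hk hk' => Nat.findGreatest_is_greatest hk hk'
    have hiLt : i ≤ L - 2 := by
      by_contra hcon
      have hieq : i = L - 1 := by omega
      apply hsx
      have := hPi
      rw [hPdef] at this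
      rw [hieq] at this
      exact this.symm
    set n' := L - i + 2 with hn'def
    set c : ℕ → V := fun m => if m = 0 then s else q.getVert (i + m - 1) with hcdef
    have hc0 : c 0 = s := if_pos rfl
    have hcm : ∀ m, 1 ≤ m → c m = q.getVert (i + m - 1) := fun m hm' => if_neg (by omega)
    refine no_chordless_cycle hG (show 4 ≤ n' by omega) c ?_ ?_ ?_ ?_
    · intro a b ha hb he
      by_contra hne
      rcases Nat.eq_zero_or_pos a with ha0 | ha0
      · have hb1 : 1 ≤ b := by omega
        rw [ha0, hc0, hcm b hb1] at he
        exact hsX (he ▸ hmem (i + b - 1) (by omega))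
      · rcases Nat.eq_zero_or_pos b with hb0 | hb0
        · rw [hb0, hc0, hcm a (by omega)] at he
          exact hsX (he.symm ▸ hmem (i + a - 1) (by omega))
        · rw [hcm a (by omega), hcm b (by omega)] at he
          have := hinj (i := i + a - 1) (j := i + b - 1) (by omega) (by omega) he
          omega
    · intro a ha
      rcases Nat.eq_zero_or_pos a with ha0 | ha0
      · rw [ha0, hc0, hcm 1 le_rfl, show i + 1 - 1 = i by omega]
        exact hPi
      · rw [hcm a (by omega), hcm (a + 1) (by omega),
          show i + (a + 1) - 1 = (i + a - 1) + 1 by omega]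
        exact (q.adj_getVert_succ (by omega)).1
    · rw [hcm (n' - 1) (by omega), show i + (n' - 1) - 1 = L by omega, hgL, hc0]
      exact hst.symm
    · intro a b hab hb hadj
      rcases Nat.eq_zero_or_pos a with ha0 | ha0
      · rw [ha0, hc0, hcm b (by omega)] at hadj
        rcases le_or_gt (i + b - 1) (L - 1) with hbL | hbL
        · have : ¬ (i < i + b - 1) := fun hlt => higr _ hlt hbL hadj
          have hb1 : b = 1 := by omega
          omega
        · right
          constructor
          · omega
          · omega
      · rw [hcm a (by omega), hcm b (by omega)] at hadj
        have := min_induced hqmin (i := i + a - 1) (j := i + b - 1) (by omega) (by omega)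
          ⟨hadj, hmem _ (by omega), hmem _ (by omega)⟩
        omega
  -- contradiction with maximality
  have hcard := hvmax x (by simp [hxC])
  have hAB : S.toFinset.filter (fun z => G.Adj v z) ⊂ S.toFinset.filter (fun z => G.Adj x z) := by
    constructor
    · intro z hz
      rw [Finset.mem_filter] at hz ⊢
      exact ⟨hz.1, claim z (by simpa using hz.1) hz.2⟩
    · intro hBA
      have htB : t ∈ S.toFinset.filter (fun z => G.Adj x z) := by
        rw [Finset.mem_filter]
        exact ⟨by simpa using ht, hxt⟩
      have := hBA htB
      rw [Finset.mem_filter] at this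
      exact hvt this.2
  exact absurd hcard (not_le.mpr (Finset.card_lt_card hAB))


end ChordalAux

open ChordalAux in
theorem stmt2 [Fintype V] (G : SimpleGraph V) (hG : Chordal G)
    (S : Set V) (hS : IsMinSeparator G S) :
    ∃ x y : V, x ∉ S ∧ y ∉ S ∧ x ≠ y ∧ Separates G S x y ∧
      S ⊆ G.neighborSet x ∧ S ⊆ G.neighborSet y := by
  obtain ⟨u, w, h⟩ := hS
  have hsep := h.2.2.2.2.1
  obtain ⟨x, hx, hxc⟩ := complete_side hG h
  obtain ⟨y, hy, hyc⟩ := complete_side hG (minsep_symm h)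
  refine ⟨x, y, hx.notMem, hy.notMem, ?_, ?_, hxc, hyc⟩
  · rintro rfl
    exact not_both_sides hsep hx hy
  · intro p
    by_contra hcon
    push_neg at hcon
    exact not_both_sides hsep (hx.trans ⟨p, hcon⟩) hy
end

section
/- Every minimal separator of a chordal graph is the intersection of two maximal cliques. -/
open SimpleGraph

variable {V : Type*}

namespace ChordalAux

variable {G : SimpleGraph V}

lemma chain_consec {l : List V} (h : l.IsChain G.Adj) {i : ℕ} (hi : i + 1 < l.length) :
    G.Adj l[i] l[i+1] := by
  rw [List.isChain_iff_getElem] at h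
  simpa using h i (by omega)

lemma nodup_getElem_inj {l : List V} (hd : l.Nodup) {i j : ℕ} (hi : i < l.length)
    (hj : j < l.length) (h : l[i] = l[j]) : i = j := by
  have := List.nodup_iff_injective_get.mp hd (a₁ := ⟨i, hi⟩) (a₂ := ⟨j, hj⟩) (by simpa using h)
  simpa using congrArg Fin.val this


lemma gec {l : List V} {i j : ℕ} (h : i = j) (hj : j < l.length) : l[i]'(h ▸ hj) = l[j] := by
  subst h; rfl

lemma chain_adj_iff {l : List V} (hc : l.IsChain G.Adj) (hd : l.Nodup)
    (hcf : ∀ i j (_ : i < l.length) (_ : j < l.length), i+1 < j → ¬ G.Adj l[i] l[j])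
    {i j : ℕ} (hi : i < l.length) (hj : j < l.length) :
    G.Adj l[i] l[j] ↔ (i+1 = j ∨ j+1 = i) := by
  constructor
  · intro hadj
    rcases Nat.lt_trichotomy i j with h | h | h
    · rcases Nat.lt_or_ge (i+1) j with h' | h'
      · exact absurd hadj (hcf i j hi hj h')
      · left; omega
    · exfalso; subst h; exact hadj.ne rfl
    · rcases Nat.lt_or_ge (j+1) i with h' | h'
      · exact absurd hadj.symm (hcf j i hj hi h')
      · right; omega
  · rintro (h | h)
    · subst h; exact chain_consec hc hj
    · subst h; exact (chain_consec hc hi).symm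

/-- From a "chordless cycle list" get a contradiction with chordality. -/
lemma no_cycle_list (hG : Chordal G) (l : List V) (hn : 4 ≤ l.length) (hd : l.Nodup)
    (hadj : ∀ i j (hi : i < l.length) (hj : j < l.length),
      G.Adj l[i] l[j] ↔ (i = (j+1) % l.length ∨ j = (i+1) % l.length)) : False := by
  obtain ⟨k, hk⟩ : ∃ k, l.length = k + 2 := ⟨l.length - 2, by omega⟩
  have f : Fin (k+2) → V := fun i => l[(i : ℕ)]'(by omega)
  have key : ∀ a b : Fin (k+2), (G.Adj (l[(a : ℕ)]'(by omega)) (l[(b : ℕ)]'(by omega))) ↔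
      (cycleGraph (k+2)).Adj a b := by
    intro a b
    rw [hadj a b (by omega) (by omega), cycleGraph_adj, hk]
    have hval : ∀ u v : Fin (k+2), u - v = 1 ↔ (u : ℕ) = ((v : ℕ) + 1) % (k+2) := by
      intro u v
      rw [sub_eq_iff_eq_add, Fin.ext_iff]
      simp [Fin.add_def, Nat.add_comm]
    rw [hval a b, hval b a]
  have hinj : Function.Injective (fun i : Fin (k+2) => l[(i : ℕ)]'(by omega)) := by
    intro a b hab
    exact Fin.ext (nodup_getElem_inj hd (by omega) (by omega) hab)
  exact (hG (k+2) (by omega)).false ⟨⟨fun i => l[(i : ℕ)]'(by omega), hinj⟩, fun {a b} => key a b⟩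


lemma mod_succ_eq (t N : ℕ) (h : t < N) : (t+1) % N = if t+1 = N then 0 else t+1 := by
  split_ifs with h'
  · rw [h', Nat.mod_self]
  · exact Nat.mod_eq_of_lt (by omega)

lemma head?_getElem {l : List V} {x : V} (h : l.head? = some x) :
    ∃ h0 : 0 < l.length, l[0] = x := by
  cases l with
  | nil => simp at h
  | cons a t => exact ⟨by simp, by simpa using h⟩

lemma getLast?_getElem {l : List V} {y : V} (h : l.getLast? = some y) :
    ∃ h0 : 0 < l.length, l[l.length - 1]'(by omega) = y := by
  have hne : l ≠ [] := by rintro rfl; simp at h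
  refine ⟨List.length_pos_iff.mpr hne, ?_⟩
  rw [← List.getLast_eq_getElem hne]
  rw [List.getLast?_eq_getLast hne] at h
  exact Option.some_injective _ h


lemma cycle_glue (hG : Chordal G) (x y : V) (l1 l2 : List V)
    (h1 : l1.IsChain G.Adj) (h2 : l2.IsChain G.Adj)
    (hh1 : l1.head? = some x) (hh2 : l2.head? = some x)
    (hl1 : l1.getLast? = some y) (hl2 : l2.getLast? = some y)
    (hn1 : 2 ≤ l1.length) (hn2 : 3 ≤ l2.length) (hN : 6 ≤ l1.length + l2.length)
    (hd1 : l1.Nodup) (hd2 : l2.Nodup)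
    (hcf1 : ∀ i j (_ : i < l1.length) (_ : j < l1.length), i+1 < j → ¬ G.Adj l1[i] l1[j])
    (hcf2 : ∀ i j (_ : i < l2.length) (_ : j < l2.length), i+1 < j →
        ¬(i = 0 ∧ j = l2.length - 1) → ¬ G.Adj l2[i] l2[j])
    (hix : ∀ z ∈ l1, z ∈ l2 → z = x ∨ z = y)
    (hcross : ∀ a ∈ l1, ∀ b ∈ l2, a ≠ x → a ≠ y → b ≠ x → b ≠ y → ¬ G.Adj a b) : False := by
  obtain ⟨hpos1, hx1⟩ := head?_getElem hh1
  obtain ⟨hpos2, hx2⟩ := head?_getElem hh2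
  obtain ⟨_, hy1⟩ := getLast?_getElem hl1
  obtain ⟨_, hy2⟩ := getLast?_getElem hl2
  have hxy : x ≠ y := by
    intro h
    apply (show (0:ℕ) ≠ l1.length - 1 by omega)
    exact nodup_getElem_inj hd1 hpos1 (by omega) (hx1.trans (h.trans hy1.symm))
  set M : List V := (l2.drop 1).dropLast with hM
  have hM_len : M.length = l2.length - 2 := by simp [hM]; omega
  have hMsub : M.Sublist l2 := (List.dropLast_sublist _).trans (List.drop_sublist _ _)
  have hMget : ∀ (k r : ℕ) (hk : k < M.length) (hr : r < l2.length), r = k + 1 →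
      M[k] = l2[r] := by
    intro k r hk hr hkr
    subst hkr
    simp [hM, List.getElem_dropLast, Nat.add_comm]
  set L : List V := l1 ++ M.reverse with hL
  have hL_len : L.length = l1.length + l2.length - 2 := by simp [hL, hM_len]; omega
  have hLget1 : ∀ (i : ℕ) (hi : i < l1.length), L[i]'(by simp [hL]; omega) = l1[i] := by
    intro i hi
    simp [hL, List.getElem_append_left hi]
  have hLget2 : ∀ (i : ℕ) (h1 : l1.length ≤ i) (h2 : i < L.length),
      L[i] = l2[L.length - i]'(by omega) := by
    intro i hi1 hi2
    have hi2' : i - l1.length < M.reverse.length := by simp [hM_len]; omega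
    have e1 : L[i] = M.reverse[i - l1.length]'hi2' := by
      simp only [hL]
      exact List.getElem_append_right (by omega)
    rw [e1, List.getElem_reverse]
    refine hMget _ _ (by omega) (by omega) (by simp only [hM_len] at hi2' ⊢; omega)
  -- x and y are not in M
  have hxM : x ∉ M := by
    intro hmem
    obtain ⟨k, hk, hkx⟩ := List.getElem_of_mem hmem
    apply (show k+1 ≠ 0 by omega)
    exact nodup_getElem_inj hd2 (by omega) hpos2
      (((hMget k (k+1) hk (by omega) rfl).symm.trans hkx).trans hx2.symm)
  have hyM : y ∉ M := by
    intro hmem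
    obtain ⟨k, hk, hky⟩ := List.getElem_of_mem hmem
    apply (show k+1 ≠ l2.length - 1 by omega)
    exact nodup_getElem_inj hd2 (by omega) (by omega)
      (((hMget k (k+1) hk (by omega) rfl).symm.trans hky).trans hy2.symm)
  have hdL : L.Nodup := by
    rw [hL]
    refine List.Nodup.append hd1 (by simpa using hd2.sublist hMsub) ?_
    intro z hz1 hz2
    have hz2' : z ∈ l2 := hMsub.subset (by simpa using hz2)
    rcases hix z hz1 hz2' with rfl | rfl
    · exact hxM (by simpa using hz2)
    · exact hyM (by simpa using hz2)
  -- the spec for i < j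
  have spec : ∀ (i j : ℕ) (hij : i < j) (hj : j < L.length),
      G.Adj (L[i]'(by omega)) L[j] ↔ (j = i+1 ∨ (i = 0 ∧ j = L.length - 1)) := by
    intro i j hij hj
    rcases Nat.lt_or_ge j l1.length with hcase | hcase
    · -- both in l1
      rw [hLget1 i (by omega), hLget1 j hcase,
        chain_adj_iff h1 hd1 hcf1 (by omega) hcase]
      constructor
      · rintro (h | h) <;> omega
      · rintro (h | h)
        · omega
        · omega
    · have hrj : 1 ≤ L.length - j ∧ L.length - j ≤ l2.length - 2 := by omega
      rcases Nat.lt_or_ge i l1.length with hcase2 | hcase2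
      · rw [hLget1 i (by omega), hLget2 j hcase (by omega)]
        by_cases hi0 : i = 0
        · subst hi0
          have hxx : l1[0] = l2[0] := by rw [hx1, hx2]
          rw [hxx]
          constructor
          · intro hadj
            by_contra hcon
            push_neg at hcon
            have h1lt : 0 + 1 < L.length - j := by omega
            exact hcf2 0 (L.length - j) (by omega) (by omega) h1lt (by omega) hadj
          · rintro (h | ⟨-, h⟩)
            · omega
            · rw [gec (show L.length - j = 0 + 1 by omega) (by omega)]
              exact chain_consec h2 (by omega)
        · by_cases hilast : i = l1.length - 1
          · subst hilast
            have hyy : l1[l1.length - 1]'(by omega) = l2[l2.length - 1]'(by omega) := by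
              rw [hy1, hy2]
            rw [hyy]
            constructor
            · intro hadj
              left
              by_contra hcon
              have hlt : (L.length - j) + 1 < l2.length - 1 := by omega
              exact hcf2 (L.length - j) (l2.length - 1) (by omega) (by omega) hlt
                (by omega) hadj.symm
            · rintro (h | ⟨h, -⟩)
              · rw [gec (show l2.length - 1 = (L.length - j) + 1 by omega) (by omega)]
                exact (chain_consec h2 (by omega)).symm
              · omega
          · -- interior-interior: no adjacency
            have hmem1 : l1[i] ∈ l1 := List.getElem_mem _
            have hmem2 : l2[L.length - j]'(by omega) ∈ l2 := List.getElem_mem _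
            have hne1 : l1[i] ≠ x := by
              intro h
              apply (show i ≠ 0 by omega)
              exact nodup_getElem_inj hd1 (by omega) hpos1 (h.trans hx1.symm)
            have hne2 : l1[i] ≠ y := by
              intro h
              apply (show i ≠ l1.length - 1 by omega)
              exact nodup_getElem_inj hd1 (by omega) (by omega) (h.trans hy1.symm)
            have hne3 : l2[L.length - j]'(by omega) ≠ x := by
              intro h
              apply (show L.length - j ≠ 0 by omega)
              exact nodup_getElem_inj hd2 (by omega) hpos2 (h.trans hx2.symm)
            have hne4 : l2[L.length - j]'(by omega) ≠ y := by
              intro h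
              apply (show L.length - j ≠ l2.length - 1 by omega)
              exact nodup_getElem_inj hd2 (by omega) (by omega) (h.trans hy2.symm)
            constructor
            · intro hadj
              exact absurd hadj (hcross _ hmem1 _ hmem2 hne1 hne2 hne3 hne4)
            · rintro (h | ⟨h, -⟩) <;> omega
      · -- both in M part
        rw [hLget2 i hcase2 (by omega), hLget2 j hcase (by omega)]
        have hri : L.length - i ≤ l2.length - 2 := by omega
        constructor
        · intro hadj
          left
          by_contra hcon
          have hlt : (L.length - j) + 1 < L.length - i := by omega
          exact hcf2 (L.length - j) (L.length - i) (by omega) (by omega) hlt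
            (by omega) hadj.symm
        · rintro (h | ⟨h, -⟩)
          · rw [gec (show L.length - i = (L.length - j) + 1 by omega) (by omega)]
            exact (chain_consec h2 (by omega)).symm
          · omega
  refine no_cycle_list hG L (by omega) hdL ?_
  intro i j hi hj
  have hmod1 := mod_succ_eq i L.length (by omega)
  have hmod2 := mod_succ_eq j L.length (by omega)
  rcases Nat.lt_trichotomy i j with h | h | h
  · rw [spec i j h hj, hmod1, hmod2]
    split_ifs <;> constructor <;> (rintro (h' | h') <;> try omega) <;> omega
  · subst h
    constructor
    · intro hadj; exact absurd rfl hadj.ne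
    · rw [hmod1]
      split_ifs <;> omega
  · have := spec j i h hi
    rw [adj_comm] at this
    rw [this, hmod1, hmod2]
    split_ifs <;> constructor <;> (rintro (h' | h') <;> try omega) <;> omega


lemma walk_support_head? {a b : V} (p : G.Walk a b) : p.support.head? = some a := by
  rw [List.head?_eq_head (by simp)]
  simp

lemma walk_support_getLast? {a b : V} (p : G.Walk a b) : p.support.getLast? = some b := by
  rw [List.getLast?_eq_getLast (by simp)]
  simp

lemma walk_of_chain : ∀ (l : List V) (a b : V), (a :: l).IsChain G.Adj →
    (a :: l).getLast? = some b → ∃ p : G.Walk a b, ∀ z ∈ p.support, z ∈ a :: l := by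
  intro l
  induction l with
  | nil =>
    intro a b _ hlast
    simp only [List.getLast?_singleton, Option.some.injEq] at hlast
    subst hlast
    exact ⟨Walk.nil, by simp⟩
  | cons c t ih =>
    intro a b hchain hlast
    rw [List.isChain_cons_cons] at hchain
    obtain ⟨p, hp⟩ := ih c b hchain.2 (by simpa using hlast)
    exact ⟨Walk.cons hchain.1 p, by
      intro z hz
      rw [Walk.support_cons, List.mem_cons] at hz
      rcases hz with rfl | hz
      · simp
      · simpa using Or.inr (hp z hz)⟩

/-- The property minimized in the minimal-chain argument. -/
def QC (G : SimpleGraph V) (x : V) (R T : V → Prop) (l : List V) : Prop :=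
  l.IsChain G.Adj ∧ l.head? = some x ∧ (∀ z ∈ l, R z) ∧ ∃ b, l.getLast? = some b ∧ T b

lemma take_getLast? (l : List V) (i : ℕ) (hi : i < l.length) :
    (l.take (i+1)).getLast? = some l[i] := by
  rw [List.getLast?_take]
  simp [List.getElem?_eq_getElem hi]

lemma QC_splice {x : V} {R T : V → Prop} {l : List V} (hQ : QC G x R T l)
    {i j : ℕ} (hij : i < j) (hj : j < l.length)
    (h : l[i]'(by omega) = l[j] ∨ ((i+1 < j) ∧ G.Adj (l[i]'(by omega)) l[j])) :
    ∃ l', QC G x R T l' ∧ l'.length < l.length := by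
  obtain ⟨hchain, hhead, hmem, b, hlast, hTb⟩ := hQ
  have hbval : b = l[l.length - 1]'(by omega) := by
    obtain ⟨_, hb⟩ := getLast?_getElem hlast
    exact hb.symm
  have hhead0 : l[0]'(by omega) = x := (head?_getElem hhead).2
  rcases h with hdup | ⟨hij2, hadj⟩
  · -- duplicate splice: take (i+1) ++ drop (j+1)
    refine ⟨l.take (i+1) ++ l.drop (j+1), ⟨?_, ?_, ?_, ?_⟩, ?_⟩
    · refine List.isChain_append.mpr ⟨hchain.take _, hchain.drop _, ?_⟩
      intro z hz w hw
      rw [take_getLast? l i (by omega)] at hz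
      rw [List.head?_drop] at hw
      have hj1 : j + 1 < l.length := by
        by_contra hcon
        rw [List.getElem?_eq_none (by omega)] at hw
        simp at hw
      rw [List.getElem?_eq_getElem hj1] at hw
      simp only [Option.mem_def, Option.some.injEq] at hz hw
      subst hz; subst hw
      rw [hdup]
      exact chain_consec hchain hj1
    · rw [List.head?_append, List.head?_take]
      simp [hhead]
    · intro z hz
      rcases List.mem_append.mp hz with hz | hz
      · exact hmem z (List.take_subset _ _ hz)
      · exact hmem z (List.drop_subset _ _ hz)
    · rcases Nat.lt_or_ge (j+1) l.length with hlt | hge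
      · refine ⟨b, ?_, hTb⟩
        rw [List.getLast?_append, List.getLast?_drop, if_neg (by omega)]
        rw [hlast]; rfl
      · refine ⟨b, ?_, hTb⟩
        have hdrop : l.drop (j+1) = [] := List.drop_eq_nil_of_le (by omega)
        rw [hdrop, List.append_nil, take_getLast? l i (by omega)]
        have hj' : j = l.length - 1 := by omega
        rw [hbval, hdup]
        congr 1
        exact gec (by omega) (by omega)
    · simp [List.length_take, List.length_drop]; omega
  · -- chord splice: take (i+1) ++ drop j
    refine ⟨l.take (i+1) ++ l.drop j, ⟨?_, ?_, ?_, ?_⟩, ?_⟩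
    · refine List.isChain_append.mpr ⟨hchain.take _, hchain.drop _, ?_⟩
      intro z hz w hw
      rw [take_getLast? l i (by omega)] at hz
      rw [List.head?_drop, List.getElem?_eq_getElem hj] at hw
      simp only [Option.mem_def, Option.some.injEq] at hz hw
      subst hz; subst hw
      exact hadj
    · rw [List.head?_append, List.head?_take]
      simp [hhead]
    · intro z hz
      rcases List.mem_append.mp hz with hz | hz
      · exact hmem z (List.take_subset _ _ hz)
      · exact hmem z (List.drop_subset _ _ hz)
    · refine ⟨b, ?_, hTb⟩
      rw [List.getLast?_append, List.getLast?_drop, if_neg (by omega)]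
      rw [hlast]; rfl
    · simp [List.length_take, List.length_drop]; omega

lemma minChain {x : V} {R T : V → Prop} {l0 : List V} (h0 : QC G x R T l0) :
    ∃ l : List V, QC G x R T l ∧ (∀ l', QC G x R T l' → l.length ≤ l'.length) ∧
      l.Nodup ∧
      (∀ i j (_ : i < l.length) (_ : j < l.length), i+1 < j → ¬ G.Adj l[i] l[j]) := by
  classical
  have hex : ∃ n, ∃ l : List V, QC G x R T l ∧ l.length = n := ⟨l0.length, l0, h0, rfl⟩
  obtain ⟨l, hQ, hlen⟩ := Nat.find_spec hex
  refine ⟨l, hQ, ?_, ?_, ?_⟩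
  · intro l' hQ'
    rw [hlen]
    exact Nat.find_min' hex ⟨l', hQ', rfl⟩
  · by_contra hcon
    obtain ⟨i, j, hi, hj, hij, hdup⟩ : ∃ i, ∃ j, ∃ ha : i < l.length, ∃ hb : j < l.length,
        i < j ∧ l[i] = l[j] := by
      rw [List.nodup_iff_injective_get] at hcon
      simp only [Function.Injective] at hcon
      push_neg at hcon
      obtain ⟨⟨a, ha⟩, ⟨b, hb⟩, heq, hne⟩ := hcon
      rcases Nat.lt_trichotomy a b with h | h | h
      · exact ⟨a, b, ha, hb, h, by simpa using heq⟩
      · exact absurd (Fin.ext h) hne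
      · exact ⟨b, a, hb, ha, h, by simpa using heq.symm⟩
    obtain ⟨l', hQ', hlt⟩ := QC_splice hQ hij hj (Or.inl hdup)
    have := Nat.find_min' hex ⟨l', hQ', rfl⟩
    omega
  · intro i j hi hj hij hadj
    obtain ⟨l', hQ', hlt⟩ := QC_splice hQ (by omega) hj (Or.inr ⟨hij, hadj⟩)
    have := Nat.find_min' hex ⟨l', hQ', rfl⟩
    omega


/-- There is a chain (adjacent consecutive vertices) from `a` to `b` inside `C`. -/
def chainIn (G : SimpleGraph V) (C : Set V) (a b : V) : Prop :=
  ∃ l : List V, l.IsChain G.Adj ∧ l.head? = some a ∧ l.getLast? = some b ∧ ∀ z ∈ l, z ∈ C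

lemma chainIn_refl {C : Set V} {a : V} (ha : a ∈ C) : chainIn G C a a :=
  ⟨[a], by simp, by simp, by simp, by simpa⟩

lemma chainIn_symm {C : Set V} {a b : V} (h : chainIn G C a b) : chainIn G C b a := by
  obtain ⟨l, hc, hh, hl, hm⟩ := h
  refine ⟨l.reverse, ?_, by simpa using hl, by simpa using hh, by simpa using hm⟩
  rw [List.isChain_reverse]
  have : (fun a b => G.Adj b a) = G.Adj := by
    ext a b; exact adj_comm ..
  rwa [this]

lemma chainIn_trans {C : Set V} {a b c : V} (h1 : chainIn G C a b) (h2 : chainIn G C b c) :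
    chainIn G C a c := by
  obtain ⟨l1, hc1, hh1, hl1, hm1⟩ := h1
  obtain ⟨l2, hc2, hh2, hl2, hm2⟩ := h2
  cases l2 with
  | nil => simp at hh2
  | cons b' t =>
    have hb : b' = b := by simpa using hh2
    subst hb
    cases t with
    | nil =>
      have : b' = c := by simpa using hl2
      subst this
      exact ⟨l1, hc1, hh1, hl1, hm1⟩
    | cons d t' =>
      refine ⟨l1 ++ (d :: t'), ?_, ?_, ?_, ?_⟩
      · refine List.isChain_append.mpr ⟨hc1, (List.isChain_cons_cons.mp hc2).2, ?_⟩
        intro z hz w hw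
        rw [hl1] at hz
        simp only [Option.mem_def, Option.some.injEq] at hz hw
        subst hz
        simp only [List.head?_cons, Option.some.injEq] at hw
        subst hw
        exact (List.isChain_cons_cons.mp hc2).1
      · rw [List.head?_append, hh1]; rfl
      · rw [List.getLast?_append, show (d :: t').getLast? = some c by simpa using hl2]; rfl
      · intro z hz
        rcases List.mem_append.mp hz with hz | hz
        · exact hm1 z hz
        · exact hm2 z (by simp [hz])

/-- The connected region of `V \ S` containing `a`. -/
def compSet (G : SimpleGraph V) (S : Set V) (a : V) : Set V :=
  {v | v ∉ S ∧ chainIn G {z | z ∉ S} a v}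

lemma mem_compSet_self {S : Set V} {a : V} (ha : a ∉ S) : a ∈ compSet G S a :=
  ⟨ha, chainIn_refl ha⟩

lemma compSet_step {S : Set V} {a b c : V} (hb : b ∈ compSet G S a) (hadj : G.Adj b c)
    (hc : c ∉ S) : c ∈ compSet G S a := by
  refine ⟨hc, chainIn_trans hb.2 ⟨[b, c], ?_, by simp, by simp, ?_⟩⟩
  · simp [hadj]
  · intro z hz
    rcases (by simpa using hz : z = b ∨ z = c) with rfl | rfl
    · exact hb.1
    · exact hc

lemma compSet_closure {S : Set V} {a : V} :
    ∀ (l : List V), l.IsChain G.Adj → (∀ z ∈ l, z ∉ S) →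
      ∀ x, l.head? = some x → x ∈ compSet G S a → ∀ z ∈ l, z ∈ compSet G S a := by
  intro l
  induction l with
  | nil => intro _ _ x _ _ z hz; simp at hz
  | cons hd tl ih =>
    intro hc hm x hx hxmem z hz
    have hhd : hd = x := by simpa using hx
    subst hhd
    rcases List.mem_cons.mp hz with rfl | hz
    · exact hxmem
    · cases tl with
      | nil => simp at hz
      | cons c t' =>
        have hadj : G.Adj hd c := (List.isChain_cons_cons.mp hc).1
        have hcmem : c ∈ compSet G S a :=
          compSet_step hxmem hadj (hm c (by simp))
        exact ih (List.isChain_cons_cons.mp hc).2 (fun y hy => hm y (by simp [hy]))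
          c rfl hcmem z hz

section Sep

variable {S : Set V} {u w : V}

lemma Separates_symm (h : ∀ p : G.Walk u w, ∃ x ∈ p.support, x ∈ S) :
    ∀ p : G.Walk w u, ∃ x ∈ p.support, x ∈ S := by
  intro p
  obtain ⟨x, hx, hxS⟩ := h p.reverse
  exact ⟨x, by simpa [Walk.support_reverse] using hx, hxS⟩

lemma compSet_disjoint (hsep : ∀ p : G.Walk u w, ∃ x ∈ p.support, x ∈ S) {v : V}
    (hu : v ∈ compSet G S u) (hw : v ∈ compSet G S w) : False := by
  have huw : chainIn G {z | z ∉ S} u w := chainIn_trans hu.2 (chainIn_symm hw.2)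
  obtain ⟨l, hc, hh, hl, hm⟩ := huw
  cases l with
  | nil => simp at hh
  | cons a t =>
    have ha : a = u := by simpa using hh
    subst ha
    obtain ⟨p, hp⟩ := walk_of_chain t a w hc hl
    obtain ⟨x, hx, hxS⟩ := hsep p
    exact hm x (hp x hx) hxS

/-- Fullness: every vertex of a minimal separator has a neighbour in the component of `u`. -/
lemma compSet_full (hu : u ∉ S)
    (hsep : ∀ p : G.Walk u w, ∃ x ∈ p.support, x ∈ S)
    (hmin : ∀ S' ⊂ S, ¬ ∀ p : G.Walk u w, ∃ x ∈ p.support, x ∈ S')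
    {s : V} (hs : s ∈ S) : ∃ a ∈ compSet G S u, G.Adj a s := by
  have hss : S \ {s} ⊂ S := Set.sdiff_singleton_ssubset.mpr hs
  have := hmin _ hss
  push_neg at this
  obtain ⟨p, hp⟩ := this
  have hsl : s ∈ p.support := by
    obtain ⟨x, hx, hxS⟩ := hsep p
    have := hp x hx
    have : x = s := by
      by_contra hne
      exact this ⟨hxS, hne⟩
    exact this ▸ hx
  have hprop : ∀ z ∈ p.support, z = s ∨ z ∉ S := by
    intro z hz
    by_cases h : z = s
    · exact Or.inl h
    · exact Or.inr (fun hzS => hp z hz ⟨hzS, h⟩)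
  -- induct along the support
  have key : ∀ (l : List V), l.IsChain G.Adj → ∀ x, l.head? = some x →
      x ∈ compSet G S u → (∀ z ∈ l, z = s ∨ z ∉ S) → s ∈ l →
      ∃ a ∈ compSet G S u, G.Adj a s := by
    intro l
    induction l with
    | nil => intro _ x _ _ _ hsl; simp at hsl
    | cons hd tl ih =>
      intro hc x hx hxmem hprop hsmem
      have hhd : hd = x := by simpa using hx
      subst hhd
      by_cases hstl : s ∈ tl
      · cases tl with
        | nil => simp at hstl
        | cons c t' =>
          have hadj : G.Adj hd c := (List.isChain_cons_cons.mp hc).1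
          by_cases hcs : c = s
          · exact ⟨hd, hxmem, hcs ▸ hadj⟩
          · have hcS : c ∉ S := by
              rcases hprop c (by simp) with h | h
              · exact absurd h hcs
              · exact h
            exact ih (List.isChain_cons_cons.mp hc).2 c rfl
              (compSet_step hxmem hadj hcS) (fun z hz => hprop z (by simp [hz])) hstl
      · have : s = hd := by
          rcases List.mem_cons.mp hsmem with h | h
          · exact h
          · exact absurd h hstl
        subst this
        exact absurd hs hxmem.1
  exact key p.support (Walk.isChain_adj_support p) u (walk_support_head? p)
    (mem_compSet_self hu) hprop hsl

/-- Chain between any two vertices of `compSet G S u` staying inside `compSet G S u`. -/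
lemma chainIn_compSet {a b : V} (ha : a ∈ compSet G S u) (hb : b ∈ compSet G S u) :
    ∃ m : List V, m.IsChain G.Adj ∧ m.head? = some a ∧ m.getLast? = some b ∧
      ∀ z ∈ m, z ∈ compSet G S u := by
  obtain ⟨m, hc, hh, hl, hm⟩ := chainIn_trans (chainIn_symm ha.2) hb.2
  refine ⟨m, hc, hh, hl, ?_⟩
  exact compSet_closure m hc (fun z hz => hm z hz) a hh ha


lemma build_side {C : Set V} {x y a b : V} (hax : G.Adj x a) (hby : G.Adj b y)
    (m : List V) (hc : m.IsChain G.Adj) (hh : m.head? = some a) (hl : m.getLast? = some b)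
    (hm : ∀ z ∈ m, z ∈ C) (hxy : x ≠ y) (hnadj : ¬ G.Adj x y) :
    ∃ l : List V, QC G x (fun z => z = x ∨ z = y ∨ z ∈ C) (· = y) l ∧
      l.Nodup ∧
      (∀ i j (_ : i < l.length) (_ : j < l.length), i+1 < j → ¬ G.Adj l[i] l[j]) ∧
      3 ≤ l.length := by
  have hQ0 : QC G x (fun z => z = x ∨ z = y ∨ z ∈ C) (· = y) (x :: (m ++ [y])) := by
    refine ⟨?_, by simp, ?_, y, ?_, rfl⟩
    · rw [List.isChain_cons]
      constructor
      · intro z hz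
        rw [List.head?_append, hh] at hz
        simp only [Option.some_or, Option.mem_def, Option.some.injEq] at hz
        subst hz
        exact hax
      · refine List.isChain_append.mpr ⟨hc, by simp, ?_⟩
        intro z hz v hv
        rw [hl] at hz
        simp only [Option.mem_def, Option.some.injEq, List.head?_cons] at hz hv
        subst hz; subst hv
        exact hby
    · intro z hz
      rcases List.mem_cons.mp hz with rfl | hz
      · exact Or.inl rfl
      · rcases List.mem_append.mp hz with hz | hz
        · exact Or.inr (Or.inr (hm z hz))
        · exact Or.inr (Or.inl (by simpa using hz))
    · rw [show x :: (m ++ [y]) = (x :: m) ++ [y] by simp, List.getLast?_append]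
      rfl
  obtain ⟨l, hQ, hminlen, hnd, hcf⟩ := minChain hQ0
  refine ⟨l, hQ, hnd, hcf, ?_⟩
  obtain ⟨hchain, hhead, hmem, bb, hlast, hTb⟩ := hQ
  subst hTb
  obtain ⟨hpos, hx0⟩ := head?_getElem hhead
  obtain ⟨_, hylast⟩ := getLast?_getElem hlast
  by_contra hlen
  push_neg at hlen
  rcases (show l.length = 1 ∨ l.length = 2 by omega) with h | h
  · apply hxy
    rw [← hx0, ← hylast]
    exact gec (by omega) (by omega)
  · apply hnadj
    have hc01 := chain_consec hchain (i := 0) (by omega)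
    rw [hx0, gec (show 1 = l.length - 1 by omega) (by omega), hylast] at hc01
    exact hc01

lemma sep_is_clique (hG : Chordal G) (hu : u ∉ S) (hw : w ∉ S)
    (hsep : ∀ p : G.Walk u w, ∃ x ∈ p.support, x ∈ S)
    (hmin : ∀ S' ⊂ S, ¬ ∀ p : G.Walk u w, ∃ x ∈ p.support, x ∈ S')
    {x y : V} (hx : x ∈ S) (hy : y ∈ S) (hxy : x ≠ y) : G.Adj x y := by
  by_contra hnadj
  obtain ⟨a1, ha1, ha1x⟩ := compSet_full hu hsep hmin hx
  obtain ⟨b1, hb1, hb1y⟩ := compSet_full hu hsep hmin hy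
  have hsep' : ∀ p : G.Walk w u, ∃ z ∈ p.support, z ∈ S := Separates_symm hsep
  have hmin' : ∀ S' ⊂ S, ¬ ∀ p : G.Walk w u, ∃ z ∈ p.support, z ∈ S' :=
    fun S' hss hs => hmin S' hss (Separates_symm hs)
  obtain ⟨a2, ha2, ha2x⟩ := compSet_full hw hsep' hmin' hx
  obtain ⟨b2, hb2, hb2y⟩ := compSet_full hw hsep' hmin' hy
  obtain ⟨m1, hc1, hh1, hl1, hm1⟩ := chainIn_compSet ha1 hb1
  obtain ⟨m2, hc2, hh2, hl2, hm2⟩ := chainIn_compSet ha2 hb2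
  obtain ⟨l1, hQ1, hnd1, hcf1, hlen1⟩ :=
    build_side ha1x.symm hb1y m1 hc1 hh1 hl1 hm1 hxy hnadj
  obtain ⟨l2, hQ2, hnd2, hcf2, hlen2⟩ :=
    build_side ha2x.symm hb2y m2 hc2 hh2 hl2 hm2 hxy hnadj
  obtain ⟨hchain1, hhead1, hmem1, b1', hlast1, hT1⟩ := hQ1
  obtain ⟨hchain2, hhead2, hmem2, b2', hlast2, hT2⟩ := hQ2
  rw [hT1] at hlast1
  rw [hT2] at hlast2
  refine cycle_glue hG x y l1 l2 hchain1 hchain2 hhead1 hhead2 hlast1 hlast2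
    (by omega) (by omega) (by omega) hnd1 hnd2 hcf1
    (fun i j hi hj hij _ => hcf2 i j hi hj hij) ?_ ?_
  · intro z hz1 hz2
    rcases hmem1 z hz1 with h | h | h
    · exact Or.inl h
    · exact Or.inr h
    · rcases hmem2 z hz2 with h' | h' | h'
      · exact Or.inl h'
      · exact Or.inr h'
      · exact absurd h' (fun h'' => compSet_disjoint hsep h h'')
  · intro p hp q hq hpx hpy hqx hqy hadj
    have hpC : p ∈ compSet G S u := by
      rcases hmem1 p hp with h | h | h
      · exact absurd h hpx
      · exact absurd h hpy
      · exact h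
    have hqC : q ∈ compSet G S w := by
      rcases hmem2 q hq with h | h | h
      · exact absurd h hqx
      · exact absurd h hqy
      · exact h
    exact compSet_disjoint hsep (compSet_step hpC hadj hqC.1) hqC


lemma exists_complete_vertex [Fintype V] (hG : Chordal G) (hu : u ∉ S)
    (hsep : ∀ p : G.Walk u w, ∃ x ∈ p.support, x ∈ S)
    (hmin : ∀ S' ⊂ S, ¬ ∀ p : G.Walk u w, ∃ x ∈ p.support, x ∈ S')
    (hclique : ∀ x ∈ S, ∀ y ∈ S, x ≠ y → G.Adj x y) :
    ∃ v ∈ compSet G S u, ∀ s ∈ S, G.Adj v s := by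
  classical
  obtain ⟨v, hvmem, hvmax⟩ := Finset.exists_max_image (Set.toFinite (compSet G S u)).toFinset
    (fun z => ((Set.toFinite S).toFinset.filter (fun t => G.Adj z t)).card)
    ⟨u, (Set.Finite.mem_toFinset _).mpr (mem_compSet_self hu)⟩
  have hv : v ∈ compSet G S u := (Set.Finite.mem_toFinset _).mp hvmem
  refine ⟨v, hv, ?_⟩
  intro s hs
  by_contra hvs
  obtain ⟨b0, hb0, hb0s⟩ := compSet_full hu hsep hmin hs
  obtain ⟨m, hcm, hhm, hlm, hmm⟩ := chainIn_compSet hv hb0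
  have hQ0 : QC G v (fun z => z ∈ compSet G S u) (fun z => G.Adj z s) m :=
    ⟨hcm, hhm, hmm, b0, hlm, hb0s⟩
  obtain ⟨l, hQ, hminlen, hnd, hcf⟩ := minChain hQ0
  obtain ⟨hchain, hhead, hmem', b, hlast, hbs⟩ := hQ
  obtain ⟨hpos, hx0⟩ := head?_getElem hhead
  obtain ⟨_, hblast⟩ := getLast?_getElem hlast
  have hlen2 : 2 ≤ l.length := by
    by_contra hcon
    have h1 : l.length = 1 := by omega
    apply hvs
    have : b = v := by
      rw [← hx0, ← hblast]
      exact (gec (by omega) (by omega)).symm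
    rw [← this]
    exact hbs
  have htrunc : ∀ i (hi : i < l.length - 1), ¬ G.Adj (l[i]'(by omega)) s := by
    intro i hi hadj
    have hQ' : QC G v (fun z => z ∈ compSet G S u) (fun z => G.Adj z s) (l.take (i+1)) := by
      refine ⟨hchain.take _, ?_, fun z hz => hmem' z (List.take_subset _ _ hz),
        l[i]'(by omega), take_getLast? l i (by omega), hadj⟩
      rw [List.head?_take]
      simp [hhead]
    have := hminlen _ hQ'
    rw [List.length_take] at this
    omega
  have hbC : b ∈ compSet G S u := by
    rw [← hblast]
    exact hmem' _ (List.getElem_mem _)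
  obtain ⟨t, htS, hvt, hbt⟩ : ∃ t ∈ S, G.Adj v t ∧ ¬ G.Adj b t := by
    by_contra hcon
    push_neg at hcon
    have hsub : (Set.toFinite S).toFinset.filter (fun t => G.Adj v t) ⊂
        (Set.toFinite S).toFinset.filter (fun t => G.Adj b t) := by
      constructor
      · intro t ht
        rw [Finset.mem_filter, Set.Finite.mem_toFinset] at ht ⊢
        exact ⟨ht.1, hcon t ht.1 ht.2⟩
      · intro hsup
        have := hsup (Finset.mem_filter.mpr ⟨(Set.Finite.mem_toFinset _).mpr hs, hbs⟩)
        rw [Finset.mem_filter] at this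
        exact hvs this.2
    have hlt := Finset.card_lt_card hsub
    have := hvmax b ((Set.Finite.mem_toFinset _).mpr hbC)
    omega
  have hts : t ≠ s := fun h => hvs (h ▸ hvt)
  have hAdjts : G.Adj t s := hclique t htS s hs hts
  set P : ℕ → Prop := fun k => ∃ hk : k < l.length, G.Adj (l[k]'hk) t with hP
  have hP0 : P 0 := ⟨by omega, by rw [hx0]; exact hvt⟩
  set j := Nat.findGreatest P (l.length - 1) with hj
  have hPj : P j := Nat.findGreatest_spec (by omega) hP0
  have hjle : j ≤ l.length - 1 := Nat.findGreatest_le _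
  have hjmax : ∀ k, j < k → k ≤ l.length - 1 → ¬ P k :=
    fun k h1 h2 => Nat.findGreatest_is_greatest h1 h2
  have hjlt : j < l.length - 1 := by
    rcases Nat.lt_or_ge j (l.length - 1) with h | h
    · exact h
    · exfalso
      apply hbt
      have hjeq : j = l.length - 1 := by omega
      obtain ⟨hk, hadj⟩ := hPj
      rw [← hblast]
      rw [gec (show l.length - 1 = j by omega) (by omega)]
      exact hadj
  set l2c : List V := t :: (l.drop j ++ [s]) with hl2c
  have hn2 : l2c.length = l.length - j + 2 := by
    simp [hl2c]
  have hget : ∀ p (h1 : 1 ≤ p) (h2 : p ≤ l.length - j),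
      l2c[p]'(by omega) = l[j + p - 1]'(by omega) := by
    intro p h1 h2
    obtain ⟨q, rfl⟩ : ∃ q, p = q + 1 := ⟨p - 1, by omega⟩
    have e0 : l2c[q+1]'(by omega) = (l.drop j ++ [s])[q]'(by simp; omega) := by
      simp [hl2c]
    rw [e0, List.getElem_append_left (by simp; omega), List.getElem_drop]
    exact gec (by omega) (by omega)
  have hlast2 : l2c.getLast? = some s := by
    rw [show l2c = (t :: l.drop j) ++ [s] by simp [hl2c], List.getLast?_append]
    rfl
  have hgetlast : l2c[l2c.length - 1]'(by omega) = s := (getLast?_getElem hlast2).2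
  have hdropnd : (l.drop j).Nodup := hnd.sublist (List.drop_sublist _ _)
  have hdropmem : ∀ z ∈ l.drop j, z ∈ compSet G S u :=
    fun z hz => hmem' z (List.drop_subset _ _ hz)
  refine cycle_glue hG t s [t, s] l2c (by simp [hAdjts]) ?_ (by simp) (by simp [hl2c]) (by simp) hlast2
    (by simp) (by omega) (by simp; omega) (by simp [hts]) ?_
    (by intro i j' hi hj' hij'; simp at hi hj'; omega) ?_ (by intro z hz _; simpa using hz) ?_
  · -- chain' l2c
    rw [hl2c, List.isChain_cons]
    constructor
    · intro z hz
      rw [List.head?_append, List.head?_drop, List.getElem?_eq_getElem (by omega)] at hz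
      simp only [Option.some_or, Option.mem_def, Option.some.injEq] at hz
      subst hz
      exact hPj.2.symm
    · refine List.isChain_append.mpr ⟨hchain.drop _, by simp, ?_⟩
      intro z hz v' hv'
      rw [List.getLast?_drop, if_neg (by omega), hlast] at hz
      simp only [Option.mem_def, Option.some.injEq, List.head?_cons] at hz hv'
      subst hz; subst hv'
      exact hbs
  · -- nodup l2c
    rw [hl2c, List.nodup_cons]
    constructor
    · intro hmem2
      rcases List.mem_append.mp hmem2 with h | h
      · exact (hdropmem t h).1 htS
      · exact hts (by simpa using h)
    · refine List.Nodup.append hdropnd (by simp) ?_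
      intro z hz1 hz2
      rw [List.mem_singleton] at hz2
      subst hz2
      exact (hdropmem z hz1).1 hs
  · -- weak chordfree for l2c
    intro p q hp hq hpq hne hadj
    rcases (show q = l2c.length - 1 ∨ q ≤ l2c.length - 2 by omega) with hq1 | hq1
    · -- q is the final s
      have hqs : l2c[q] = s := by
        rw [gec (show q = l2c.length - 1 by omega) (by omega)]
        exact hgetlast
      have hp1 : 1 ≤ p := by
        by_contra hcon
        exact hne ⟨by omega, hq1⟩
      have hps : l2c[p]'(by omega) = l[j + p - 1]'(by omega) :=
        hget p hp1 (by omega)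
      rw [hps, hqs] at hadj
      exact htrunc (j + p - 1) (by omega) hadj
    · rcases Nat.eq_zero_or_pos p with hp0 | hp1
      · -- p is the head t
        subst hp0
        have hq2 : 2 ≤ q := by omega
        have hqv : l2c[q] = l[j + q - 1]'(by omega) :=
          hget q (by omega) (by omega)
        have h0 : l2c[0]'(by omega) = t := by simp [hl2c]
        rw [h0, hqv] at hadj
        exact hjmax (j + q - 1) (by omega) (by omega) ⟨by omega, hadj.symm⟩
      · -- both inside l
        have hpv : l2c[p]'(by omega) = l[j + p - 1]'(by omega) :=
          hget p hp1 (by omega)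
        have hqv : l2c[q] = l[j + q - 1]'(by omega) :=
          hget q (by omega) (by omega)
        rw [hpv, hqv] at hadj
        exact hcf (j + p - 1) (j + q - 1) (by omega) (by omega) (by omega) hadj
  · -- cross adjacency: vacuous since l1 has no interior
    intro a' ha' b' hb' hax hay hbx hby
    rcases (by simpa using ha' : a' = t ∨ a' = s) with rfl | rfl
    · exact absurd rfl hax
    · exact absurd rfl hay

end Sep

end ChordalAux

namespace ChordalAux

lemma exists_maxclique [Fintype V] (G : SimpleGraph V) {c : Set V} (hc : G.IsClique c) :
    ∃ Q, IsMaxClique G Q ∧ c ⊆ Q := by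
  obtain ⟨Q, hQ, hmax⟩ := Set.Finite.exists_maximalFor id {t : Set V | G.IsClique t ∧ c ⊆ t}
    (Set.toFinite _) ⟨c, hc, subset_rfl⟩
  exact ⟨Q, ⟨hQ.1, fun t ht hsub => hsub.antisymm (hmax ⟨ht, hQ.2.trans hsub⟩ hsub)⟩, hQ.2⟩

end ChordalAux

theorem stmt3 [Fintype V] (G : SimpleGraph V) (hG : Chordal G)
    (S : Set V) (hS : IsMinSeparator G S) :
    ∃ Q Q' : Set V, IsMaxClique G Q ∧ IsMaxClique G Q' ∧ Q ≠ Q' ∧ Q ∩ Q' = S := by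
  classical
  open ChordalAux in
  obtain ⟨u, w, huw, hnadj, huS, hwS, hsep0, hmin0⟩ := hS
  have hsep : ∀ p : G.Walk u w, ∃ x ∈ p.support, x ∈ S := hsep0
  have hmin : ∀ S' ⊂ S, ¬ ∀ p : G.Walk u w, ∃ x ∈ p.support, x ∈ S' := hmin0
  have hsep' : ∀ p : G.Walk w u, ∃ x ∈ p.support, x ∈ S := Separates_symm hsep
  have hmin' : ∀ S' ⊂ S, ¬ ∀ p : G.Walk w u, ∃ x ∈ p.support, x ∈ S' :=
    fun S' h hs => hmin S' h (Separates_symm hs)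
  have hclique : ∀ x ∈ S, ∀ y ∈ S, x ≠ y → G.Adj x y :=
    fun x hx y hy hxy => sep_is_clique hG huS hwS hsep hmin hx hy hxy
  obtain ⟨xu, hxu, hxuS⟩ := exists_complete_vertex hG huS hsep hmin hclique
  obtain ⟨xw, hxw, hxwS⟩ := exists_complete_vertex hG hwS hsep' hmin' hclique
  have hcl : ∀ (z : V), z ∈ compSet G S u ∪ compSet G S w → (∀ s ∈ S, G.Adj z s) →
      G.IsClique (insert z S) := by
    intro z hz hzS
    intro a ha b hb hab
    rcases Set.mem_insert_iff.mp ha with h1 | h1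
    · rcases Set.mem_insert_iff.mp hb with h2 | h2
      · exact absurd (h1.trans h2.symm) hab
      · subst h1; exact hzS b h2
    · rcases Set.mem_insert_iff.mp hb with h2 | h2
      · subst h2; exact (hzS a h1).symm
      · exact hclique a h1 b h2 hab
  obtain ⟨Q, hQ, hQsub⟩ := exists_maxclique G (hcl xu (Or.inl hxu) hxuS)
  obtain ⟨Q', hQ', hQsub'⟩ := exists_maxclique G (hcl xw (Or.inr hxw) hxwS)
  have hxuQ : xu ∈ Q := hQsub (Set.mem_insert _ _)
  have hxwQ' : xw ∈ Q' := hQsub' (Set.mem_insert _ _)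
  have hSQ : S ⊆ Q := fun s hs => hQsub (Set.mem_insert_of_mem _ hs)
  have hSQ' : S ⊆ Q' := fun s hs => hQsub' (Set.mem_insert_of_mem _ hs)
  have hQu : ∀ z ∈ Q, z ∉ S → z ∈ compSet G S u := by
    intro z hz hzS
    by_cases hzx : z = xu
    · exact hzx ▸ hxu
    · exact compSet_step hxu (hQ.1 hxuQ hz (fun h => hzx h.symm)) hzS
  have hQw : ∀ z ∈ Q', z ∉ S → z ∈ compSet G S w := by
    intro z hz hzS
    by_cases hzx : z = xw
    · exact hzx ▸ hxw
    · exact compSet_step hxw (hQ'.1 hxwQ' hz (fun h => hzx h.symm)) hzS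
  have hinter : Q ∩ Q' = S := by
    apply Set.Subset.antisymm
    · rintro z ⟨hz1, hz2⟩
      by_contra hzS
      exact compSet_disjoint hsep (hQu z hz1 hzS) (hQw z hz2 hzS)
    · exact fun s hs => ⟨hSQ hs, hSQ' hs⟩
  refine ⟨Q, Q', hQ, hQ', ?_, hinter⟩
  intro h
  have : xu ∈ Q ∩ Q' := ⟨hxuQ, h ▸ hxuQ⟩
  rw [hinter] at this
  exact hxu.1 this
end
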